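/- Let g ∈ {4,5}. If a graph G belongs to both F^g_{i,j,k} and F_{i',j'} for nonnegative integers i, j, k, i', j' with i ≥ 1, j ≤ i, 1 ≤ i' ≤ 4, and j' ≤ i', then max{1 − t_g + j(1 − 5t_g) − i·t_g, 0} = max{1 + j'(1 − 5t_g) − i'·t_g, 0}. -/

import Mathlib

open SimpleGraph

namespace InducedForest

/-- A graph is subcubic if every vertex has at most 3 neighbours. -/
def Subcubic {V : Type} (G : SimpleGraph V) : Prop := ∀ v : V, (G.neighborSet v).ncard ≤ 3

/-- A graph is cubic if every vertex has exactly 3 neighbours. -/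
def Cubic {V : Type} (G : SimpleGraph V) : Prop := ∀ v : V, (G.neighborSet v).ncard = 3

/-- `S` is a feedback vertex set of `G` iff `G - S` is a forest. -/
def IsFVS {V : Type} (G : SimpleGraph V) (S : Set V) : Prop := (G.induce Sᶜ).IsAcyclic

/-- `φ(G)`: the minimum size of a feedback vertex set of `G`. -/
noncomputable def fvs {V : Type} (G : SimpleGraph V) : ℕ :=
  sInf {n : ℕ | ∃ S : Set V, IsFVS G S ∧ S.ncard = n}

/-- `a(G)`: the maximum number of vertices of an induced forest in `G`. -/
noncomputable def indForestNum {V : Type} (G : SimpleGraph V) : ℕ :=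
  sSup {n : ℕ | ∃ S : Set V, (G.induce S).IsAcyclic ∧ S.ncard = n}

/-- `v` is a cut-vertex of `G`: deleting it increases the number of connected components. -/
def IsCutVertex {V : Type} (G : SimpleGraph V) (v : V) : Prop :=
  Nat.card G.ConnectedComponent < Nat.card (G.induce {u | u ≠ v}).ConnectedComponent

/-- `B` is a block of `G`: a maximal set of vertices inducing a connected subgraph
without cut-vertices. -/
def IsBlock {V : Type} (G : SimpleGraph V) (B : Set V) : Prop :=
  ((G.induce B).Connected ∧ ∀ v, ¬ IsCutVertex (G.induce B) v) ∧
  ∀ B' : Set V, B ⊆ B' →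
    ((G.induce B').Connected ∧ ∀ v, ¬ IsCutVertex (G.induce B') v) → B' = B

/-- 2-connectedness: at least 3 vertices and removing fewer than 2 vertices
leaves a connected graph. -/
def TwoConnected {V : Type} (G : SimpleGraph V) : Prop :=
  3 ≤ Nat.card V ∧ ∀ s : Set V, s.ncard < 2 → (G.induce sᶜ).Connected

/-- 3-connectedness: at least 4 vertices and removing fewer than 3 vertices
leaves a connected graph. -/
def ThreeConnected {V : Type} (G : SimpleGraph V) : Prop :=
  4 ≤ Nat.card V ∧ ∀ s : Set V, s.ncard < 3 → (G.induce sᶜ).Connected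

/-- The graph obtained from `H` by subdividing the edge `xy` once;
the subdivision vertex is `none`. -/
def subdivide {V : Type} (H : SimpleGraph V) (x y : V) : SimpleGraph (Option V) :=
  SimpleGraph.fromRel (fun p q =>
    match p, q with
    | some u, some v => H.Adj u v ∧ s(u, v) ≠ s(x, y)
    | some u, none => u = x ∨ u = y
    | _, _ => False)

/-- `G` is obtained from `H` by subdividing one edge once. -/
def IsSubdivisionOfOneEdge {V W : Type} (H : SimpleGraph V) (G : SimpleGraph W) : Prop :=
  ∃ x y : V, H.Adj x y ∧ Nonempty (G ≃g subdivide H x y)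

/-- The graph obtained from `K` by adding one new vertex (`none`)
joined to all vertices of `S`. -/
def addApex {V : Type} (K : SimpleGraph V) (S : Set V) : SimpleGraph (Option V) :=
  SimpleGraph.fromRel (fun p q =>
    match p, q with
    | some u, some v => K.Adj u v
    | some u, none => u ∈ S
    | _, _ => False)

/-- `G` is (isomorphic to) `H ∘ (e1, e2, a)`: subdivide `e1` and `e2` once each
(with `e1` subdivided twice if `e1 = e2`) and add a new vertex adjacent to `a` and to the
two subdivision vertices. -/
def IsCircOp {V W : Type} (H : SimpleGraph V) (e1 e2 : Sym2 V) (a : V)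
    (G : SimpleGraph W) : Prop :=
  (e1 ≠ e2 ∧ ∃ x1 y1 x2 y2 : V, e1 = s(x1, y1) ∧ e2 = s(x2, y2) ∧
    Nonempty (G ≃g addApex (subdivide (subdivide H x1 y1) (some x2) (some y2))
      {some (some a), some none, none})) ∨
  (e1 = e2 ∧ ∃ x y : V, e1 = s(x, y) ∧
    Nonempty (G ≃g addApex (subdivide (subdivide H x y) none (some y))
      {some (some a), some none, none}))

/-- The cycle of length `n` (for `n ≥ 3`). -/
def cyc (n : ℕ) : SimpleGraph (ZMod n) :=
  SimpleGraph.fromRel (fun u v => v = u + 1)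

/-- The families `F_{i,j}` of graphs (closed under isomorphism):
`F_{i,0} = {C_i}` for `i ≥ 3`; `F_{1,1} = {K_4}`; `F_{j,j}` for `j ≥ 2` is obtained from
`F_{j-1,j-1}` by subdividing one edge once and then applying the `∘` operation at the
subdivision vertex; and `F_{i,j}` for `i > j ≥ 1` is obtained from `F_{j,j}` by `i - j`
successive single-edge subdivisions. -/
inductive MemF : ℕ → ℕ → ∀ {V : Type}, SimpleGraph V → Prop
  | cycle {i : ℕ} (hi : 3 ≤ i) {V : Type} {G : SimpleGraph V}
      (h : Nonempty (G ≃g cyc i)) : MemF i 0 G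
  | k4 {V : Type} {G : SimpleGraph V}
      (h : Nonempty (G ≃g (⊤ : SimpleGraph (Fin 4)))) : MemF 1 1 G
  | circ {j : ℕ} (hj : 2 ≤ j) {V : Type} {H : SimpleGraph V}
      (hH : MemF (j - 1) (j - 1) H) {x y : V} (hxy : H.Adj x y)
      {e1 e2 : Sym2 (Option V)} (he1 : e1 ∈ (subdivide H x y).edgeSet)
      (he2 : e2 ∈ (subdivide H x y).edgeSet)
      {W : Type} {G : SimpleGraph W}
      (hG : IsCircOp (subdivide H x y) e1 e2 none G) : MemF j j G
  | subd {i j : ℕ} (hj : 1 ≤ j) {V : Type} {H : SimpleGraph V}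
      (hH : MemF i j H) {x y : V} (hxy : H.Adj x y) {W : Type} {G : SimpleGraph W}
      (hG : Nonempty (G ≃g subdivide H x y)) : MemF (i + 1) j G

/-- `K_4^+`: the graph obtained from `K_4` by subdividing one edge once. -/
def K4plus : SimpleGraph (Option (Fin 4)) :=
  subdivide (⊤ : SimpleGraph (Fin 4)) 0 1

/-- `L`: the graph obtained from `K_4` by subdividing once each edge
of a perfect matching. -/
def Lgraph : SimpleGraph (Option (Option (Fin 4))) :=
  subdivide (subdivide (⊤ : SimpleGraph (Fin 4)) 0 1) (some 2) (some 3)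

/-- The Petersen graph. -/
def petersen : SimpleGraph (ZMod 5 × Fin 2) :=
  SimpleGraph.fromRel (fun u v =>
    (u.2 = 0 ∧ v.2 = 0 ∧ v.1 = u.1 + 1) ∨
    (u.2 = 1 ∧ v.2 = 1 ∧ v.1 = u.1 + 2) ∨
    (u.2 = 0 ∧ v.2 = 1 ∧ u.1 = v.1))

/-- `R`: the Petersen graph minus one edge. -/
def Rgraph : SimpleGraph (ZMod 5 × Fin 2) :=
  petersen.deleteEdges {s(((0 : ZMod 5), (0 : Fin 2)), ((1 : ZMod 5), (0 : Fin 2)))}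

/-- `Q_3`: the 3-dimensional cube graph. -/
def Q3 : SimpleGraph (Fin 2 × Fin 2 × Fin 2) :=
  SimpleGraph.fromRel (fun u v =>
    (u.1 ≠ v.1 ∧ u.2 = v.2) ∨ (u.1 = v.1 ∧ u.2.1 ≠ v.2.1 ∧ u.2.2 = v.2.2) ∨
    (u.1 = v.1 ∧ u.2.1 = v.2.1 ∧ u.2.2 ≠ v.2.2))

/-- `V_8`: the Wagner graph. -/
def V8 : SimpleGraph (ZMod 8) :=
  SimpleGraph.fromRel (fun u v => v = u + 1 ∨ v = u + 4)

/-- The dodecahedron, presented as the generalized Petersen graph `GP(10,2)`. -/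
def dodecahedron : SimpleGraph (ZMod 10 × Fin 2) :=
  SimpleGraph.fromRel (fun u v =>
    (u.2 = 0 ∧ v.2 = 0 ∧ v.1 = u.1 + 1) ∨
    (u.2 = 1 ∧ v.2 = 1 ∧ v.1 = u.1 + 2) ∨
    (u.2 = 0 ∧ v.2 = 1 ∧ u.1 = v.1))

/-- The families `F^g_{i,j,k}`: 2-connected subcubic graphs obtained from the disjoint
union of `k` copies of `L` (when `g = 4`) or of `R` (when `g = 5`) and one member of
`F_{i,j}` by adding `k+1` edges; when `k ≥ 1`, each added edge joins two different
constituent copies. -/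
def MemFG (g i j k : ℕ) {W : Type} (G : SimpleGraph W) : Prop :=
  TwoConnected G ∧ Subcubic G ∧
  ∃ (P : W → Fin (k + 1)) (H : SimpleGraph W),
    H ≤ G ∧ (∀ u v, H.Adj u v → P u = P v) ∧
    MemF i j (H.induce (P ⁻¹' {0})) ∧
    ((g = 4 ∧ ∀ l : Fin (k + 1), l ≠ 0 → Nonempty ((H.induce (P ⁻¹' {l})) ≃g Lgraph)) ∨
     (g = 5 ∧ ∀ l : Fin (k + 1), l ≠ 0 → Nonempty ((H.induce (P ⁻¹' {l})) ≃g Rgraph))) ∧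
    (G.edgeSet \ H.edgeSet).ncard = k + 1 ∧
    (1 ≤ k → ∀ u v, G.Adj u v → ¬ H.Adj u v → P u ≠ P v)

/-- `t_4 = 2/9`, `t_5 = 1/5`. -/
noncomputable def tg (g : ℕ) : ℝ := if g = 4 then 2 / 9 else 1 / 5

/-- The error function `ε_g` on graphs. -/
noncomputable def eps (g : ℕ) {V : Type} (G : SimpleGraph V) : ℝ := by
  classical
  exact
    if h1 : ∃ p : ℕ × ℕ, 1 ≤ p.1 ∧ p.2 ≤ p.1 ∧ MemF p.1 p.2 G then
      max (1 - (h1.choose.2 : ℝ) * (5 * tg g - 1) - (h1.choose.1 : ℝ) * tg g) 0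
    else if h2 : ∃ q : ℕ × ℕ × ℕ, 1 ≤ q.1 ∧ q.2.1 ≤ q.1 ∧ MemFG g q.1 q.2.1 q.2.2 G then
      max (1 - tg g - (h2.choose.2.1 : ℝ) * (5 * tg g - 1) - (h2.choose.1 : ℝ) * tg g) 0
    else if Nonempty (G ≃g (⊤ : SimpleGraph (Fin 2))) then -tg g
    else 0

/-- The error function `r_g(G)`: the sum of `ε_g(B)` over all blocks `B` of `G`. -/
noncomputable def rg (g : ℕ) {V : Type} (G : SimpleGraph V) : ℝ :=
  ∑ᶠ B ∈ {B : Set V | IsBlock G B}, eps g (G.induce B)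

/-- `G` has two vertex-disjoint cycles, each of length less than `g`. -/
def TwoDisjointCyclesLt {V : Type} (G : SimpleGraph V) (g : ℕ) : Prop :=
  ∃ (u v : V) (c1 : G.Walk u u) (c2 : G.Walk v v), c1.IsCycle ∧ c2.IsCycle ∧
    c1.length < g ∧ c2.length < g ∧ ∀ x, x ∈ c1.support → x ∉ c2.support

/-- `G` contains a (not necessarily induced) subgraph isomorphic to `K`. -/
def ContainsSubgraphCopy {U V : Type} (K : SimpleGraph U) (G : SimpleGraph V) : Prop :=
  ∃ f : U → V, Function.Injective f ∧ ∀ u v, K.Adj u v → G.Adj (f u) (f v)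

/-- `G` is obtained from `H` by adding edges, each of which is a cut-edge of `G`. -/
def AddCutEdges {V : Type} (H G : SimpleGraph V) : Prop :=
  H ≤ G ∧ ∀ e ∈ G.edgeSet \ H.edgeSet, G.IsBridge e

/-- The edges of `H` all lie inside the parts of the partition given by `P`. -/
def PartitionedBy {V ι : Type} (H : SimpleGraph V) (P : V → ι) : Prop :=
  ∀ u v, H.Adj u v → P u = P v

/-- `G` is `g`-minimal: a minimum counterexample to the main theorem. -/
def GMinimal (g : ℕ) {V : Type} [Fintype V] (G : SimpleGraph V) : Prop :=
  Subcubic G ∧ ¬ TwoDisjointCyclesLt G g ∧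
  tg g * G.edgeSet.ncard + rg g G < (fvs G : ℝ) ∧
  ∀ (W : Type) [Fintype W] (H : SimpleGraph W), Nat.card W < Nat.card V →
    Subcubic H → ¬ TwoDisjointCyclesLt H g →
    (fvs H : ℝ) ≤ tg g * H.edgeSet.ncard + rg g H


section Statement15Aux

lemma subdivide_adj_some {V : Type} (H : SimpleGraph V) (x y u v : V) :
    (subdivide H x y).Adj (some u) (some v) ↔ H.Adj u v ∧ s(u, v) ≠ s(x, y) := by
  simp only [subdivide, fromRel_adj]
  constructor
  · rintro ⟨-, h | h⟩
    · exact h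
    · exact ⟨h.1.symm, fun hc => h.2 (Sym2.eq_swap.trans hc)⟩
  · rintro ⟨h1, h2⟩
    exact ⟨by simpa using h1.ne, Or.inl ⟨h1, h2⟩⟩

lemma subdivide_adj_none {V : Type} (H : SimpleGraph V) (x y u : V) :
    (subdivide H x y).Adj (some u) none ↔ u = x ∨ u = y := by
  simp [subdivide, fromRel_adj]

lemma subdivide_not_adj_none {V : Type} (H : SimpleGraph V) (x y : V) :
    ¬ (subdivide H x y).Adj none none := by
  simp [subdivide, fromRel_adj]

lemma subdivide_edgeSet {V : Type} (H : SimpleGraph V) (x y : V) :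
    (subdivide H x y).edgeSet =
      (Sym2.map some) '' (H.edgeSet \ {s(x, y)}) ∪ {s(some x, none), s(some y, none)} := by
  ext e
  induction e using Sym2.ind with
  | _ p q =>
    have hnone : ∀ (z : Sym2 V), ¬ (Sym2.map some z = s(p,q) ∧ (p = none ∨ q = none)) := by
      rintro z ⟨hz, hp⟩
      have : (none : Option V) ∈ Sym2.map some z := by
        rw [hz]; rcases hp with h | h
        · rw [← h]; exact Sym2.mem_mk_left p q
        · rw [← h]; exact Sym2.mem_mk_right p q
      rw [Sym2.mem_map] at this
      obtain ⟨a, -, ha⟩ := this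
      exact Option.some_ne_none a ha
    match p, q with
    | some u, some v =>
      simp only [mem_edgeSet, subdivide_adj_some, Set.mem_union, Set.mem_image,
        Set.mem_diff, Set.mem_singleton_iff, Set.mem_insert_iff]
      constructor
      · rintro ⟨h1, h2⟩
        exact Or.inl ⟨s(u,v), ⟨h1, h2⟩, rfl⟩
      · rintro (⟨z, ⟨hz1, hz2⟩, hz⟩ | h | h)
        · induction z using Sym2.ind with
          | _ a b =>
            simp only [Sym2.map_pair_eq, Sym2.eq_iff] at hz
            rcases hz with ⟨ha, hb⟩ | ⟨ha, hb⟩ <;>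
              simp only [Option.some.injEq] at ha hb <;> subst ha <;> subst hb
            · exact ⟨hz1, hz2⟩
            · exact ⟨hz1.symm, fun hc => hz2 (Sym2.eq_swap.trans hc)⟩
        · exact absurd h (by simp [Sym2.eq_iff])
        · exact absurd h (by simp [Sym2.eq_iff])
    | some u, none =>
      simp only [mem_edgeSet, subdivide_adj_none, Set.mem_union, Set.mem_image,
        Set.mem_singleton_iff, Set.mem_insert_iff, Sym2.eq_iff]
      constructor
      · rintro (h | h)
        · subst h; simp
        · subst h; simp
      · rintro (⟨z, -, hz⟩ | h | h)
        · exact absurd ⟨hz, Or.inr rfl⟩ (hnone z)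
        · rcases h with ⟨h, -⟩ | ⟨-, h⟩ <;> simp_all
        · rcases h with ⟨h, -⟩ | ⟨-, h⟩ <;> simp_all
    | none, some u =>
      rw [Sym2.eq_swap]
      simp only [mem_edgeSet, subdivide_adj_none, Set.mem_union, Set.mem_image,
        Set.mem_singleton_iff, Set.mem_insert_iff, Sym2.eq_iff]
      constructor
      · rintro (h | h)
        · subst h; simp
        · subst h; simp
      · rintro (⟨z, -, hz⟩ | h | h)
        · exact absurd ⟨hz.trans Sym2.eq_swap, Or.inl rfl⟩ (hnone z)
        · rcases h with ⟨h, -⟩ | ⟨-, h⟩ <;> simp_all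
        · rcases h with ⟨h, -⟩ | ⟨-, h⟩ <;> simp_all
    | none, none =>
      simp only [mem_edgeSet]
      constructor
      · intro h; exact absurd h (subdivide_not_adj_none H x y)
      · rintro (⟨z, -, hz⟩ | h | h)
        · exact absurd ⟨hz, Or.inr rfl⟩ (hnone z)
        · simp [Sym2.eq_iff] at h
        · simp [Sym2.eq_iff] at h

lemma none_not_mem_map_some {V : Type} (z : Sym2 V) :
    (none : Option V) ∉ Sym2.map some z := by
  rw [Sym2.mem_map]
  rintro ⟨a, -, ha⟩
  exact Option.some_ne_none a ha

lemma natCard_option (V : Type) [Finite V] : Nat.card (Option V) = Nat.card V + 1 := by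
  have := Fintype.ofFinite V
  simp [Nat.card_eq_fintype_card]

lemma subdivide_ncard_edgeSet {V : Type} [Finite V] {H : SimpleGraph V} {x y : V}
    (hxy : H.Adj x y) :
    (subdivide H x y).edgeSet.ncard = H.edgeSet.ncard + 1 := by
  have hfin : H.edgeSet.Finite := Set.toFinite _
  rw [subdivide_edgeSet]
  have hdisj : Disjoint ((Sym2.map some) '' (H.edgeSet \ {s(x, y)}))
      ({s(Option.some x, none), s(Option.some y, none)} : Set (Sym2 (Option V))) := by
    rw [Set.disjoint_left]
    rintro e ⟨z, -, hz⟩ he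
    rcases he with h | h
    · exact none_not_mem_map_some z (by rw [hz, h]; exact Sym2.mem_mk_right _ _)
    · exact none_not_mem_map_some z
        (by rw [hz, Set.mem_singleton_iff.mp h]; exact Sym2.mem_mk_right _ _)
  rw [Set.ncard_union_eq hdisj (hfin.diff.image _) (Set.toFinite _)]
  rw [Set.ncard_image_of_injective _ (Sym2.map.injective (Option.some_injective V))]
  have h2 : ({s(Option.some x, none), s(Option.some y, none)} :
      Set (Sym2 (Option V))).ncard = 2 := by
    exact Set.ncard_pair (by simp [Sym2.eq_iff, hxy.ne])
  have h3 := Set.ncard_diff_singleton_add_one (H.mem_edgeSet.mpr hxy) hfin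
  omega

lemma addApex_adj_some {V : Type} (K : SimpleGraph V) (S : Set V) (u v : V) :
    (addApex K S).Adj (some u) (some v) ↔ K.Adj u v := by
  constructor
  · rintro ⟨-, h | h⟩
    · exact h
    · exact h.symm
  · intro h
    exact ⟨by simpa using h.ne, Or.inl h⟩

lemma addApex_adj_none {V : Type} (K : SimpleGraph V) (S : Set V) (u : V) :
    (addApex K S).Adj (some u) none ↔ u ∈ S := by
  simp [addApex, fromRel_adj]

lemma addApex_edgeSet {V : Type} (K : SimpleGraph V) (S : Set V) :
    (addApex K S).edgeSet =
      (Sym2.map some) '' K.edgeSet ∪ (fun u => s(some u, none)) '' S := by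
  ext e
  induction e using Sym2.ind with
  | _ p q =>
    match p, q with
    | some u, some v =>
      simp only [mem_edgeSet, addApex_adj_some, Set.mem_union, Set.mem_image]
      constructor
      · intro h; exact Or.inl ⟨s(u,v), h, rfl⟩
      · rintro (⟨z, hz1, hz⟩ | ⟨a, -, hz⟩)
        · induction z using Sym2.ind with
          | _ a b =>
            simp only [Sym2.map_pair_eq, Sym2.eq_iff] at hz
            rcases hz with ⟨ha, hb⟩ | ⟨ha, hb⟩ <;>
              simp only [Option.some.injEq] at ha hb <;> subst ha <;> subst hb
            · exact hz1
            · exact hz1.symm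
        · simp [Sym2.eq_iff] at hz
    | some u, none =>
      simp only [mem_edgeSet, addApex_adj_none, Set.mem_union, Set.mem_image]
      constructor
      · intro h; exact Or.inr ⟨u, h, rfl⟩
      · rintro (⟨z, -, hz⟩ | ⟨a, ha, hz⟩)
        · exact absurd (by rw [hz]; exact Sym2.mem_mk_right _ _) (none_not_mem_map_some z)
        · simp only [Sym2.eq_iff] at hz
          rcases hz with ⟨h, -⟩ | ⟨-, h⟩ <;> simp_all
    | none, some u =>
      rw [Sym2.eq_swap]
      simp only [mem_edgeSet, addApex_adj_none, Set.mem_union, Set.mem_image]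
      constructor
      · intro h; exact Or.inr ⟨u, h, rfl⟩
      · rintro (⟨z, -, hz⟩ | ⟨a, ha, hz⟩)
        · exact absurd (by rw [hz]; exact Sym2.mem_mk_right _ _) (none_not_mem_map_some z)
        · simp only [Sym2.eq_iff] at hz
          rcases hz with ⟨h, -⟩ | ⟨-, h⟩ <;> simp_all
    | none, none =>
      simp only [mem_edgeSet]
      constructor
      · rintro ⟨h, -⟩; exact absurd rfl h
      · rintro (⟨z, -, hz⟩ | ⟨a, ha, hz⟩)
        · exact absurd (by rw [hz]; exact Sym2.mem_mk_right _ _) (none_not_mem_map_some z)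
        · simp [Sym2.eq_iff] at hz

lemma addApex_ncard_edgeSet {V : Type} [Finite V] (K : SimpleGraph V) (S : Set V) :
    (addApex K S).edgeSet.ncard = K.edgeSet.ncard + S.ncard := by
  rw [addApex_edgeSet]
  have hdisj : Disjoint ((Sym2.map some) '' K.edgeSet)
      ((fun u => s(some u, none)) '' S) := by
    rw [Set.disjoint_left]
    rintro e ⟨z, -, hz⟩ ⟨a, -, ha⟩
    exact none_not_mem_map_some z (by rw [hz, ← ha]; exact Sym2.mem_mk_right _ _)
  rw [Set.ncard_union_eq hdisj (Set.toFinite _) (Set.toFinite _)]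
  rw [Set.ncard_image_of_injective _ (Sym2.map.injective (Option.some_injective V))]
  congr 1
  apply Set.ncard_image_of_injective
  intro a b hab
  simpa [Sym2.eq_iff] using hab

lemma cyc_ncard_edgeSet {i : ℕ} (hi : 3 ≤ i) : (cyc i).edgeSet.ncard = i := by
  have : NeZero i := ⟨by omega⟩
  have h1 : (1 : ZMod i) ≠ 0 := by
    intro h
    have h2' : ((1 : ℕ) : ZMod i) = 0 := by push_cast; exact h
    rw [ZMod.natCast_eq_zero_iff] at h2'
    have := Nat.le_of_dvd one_pos h2'
    omega
  have h2 : (2 : ZMod i) ≠ 0 := by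
    intro h
    have h2' : ((2 : ℕ) : ZMod i) = 0 := by push_cast; exact h
    rw [ZMod.natCast_eq_zero_iff] at h2'
    have := Nat.le_of_dvd (by norm_num) h2'
    omega
  have hne : ∀ u : ZMod i, u ≠ u + 1 := by
    intro u h
    exact h1 (by linear_combination -h)
  have hset : (cyc i).edgeSet = (fun u : ZMod i => s(u, u + 1)) '' Set.univ := by
    ext e
    induction e using Sym2.ind with
    | _ p q =>
      simp only [mem_edgeSet, cyc, fromRel_adj, Set.mem_image, Set.mem_univ, true_and]
      constructor
      · rintro ⟨hpq, h | h⟩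
        · exact ⟨p, by rw [h]⟩
        · exact ⟨q, by rw [h, Sym2.eq_swap]⟩
      · rintro ⟨u, hu⟩
        rw [Sym2.eq_iff] at hu
        rcases hu with ⟨h1', h2'⟩ | ⟨h1', h2'⟩
        · subst h1'; exact ⟨by rw [← h2']; exact hne u, Or.inl h2'.symm⟩
        · subst h1'; exact ⟨by rw [← h2']; exact (hne u).symm ∘ Eq.symm ∘ Eq.symm, Or.inr h2'.symm⟩
  rw [hset, Set.ncard_image_of_injective _ ?_, Set.ncard_univ, Nat.card_eq_fintype_card, ZMod.card]
  intro u v huv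
  rw [Sym2.eq_iff] at huv
  rcases huv with ⟨h, -⟩ | ⟨ha, hb⟩
  · exact h
  · exfalso
    apply h2
    linear_combination hb - ha

lemma k4_ncard_edgeSet : (⊤ : SimpleGraph (Fin 4)).edgeSet.ncard = 6 := by
  rw [Set.ncard_eq_toFinset_card']; decide

instance optionFinite {V : Type} [Finite V] : Finite (Option V) := by
  have := Fintype.ofFinite V
  exact Finite.of_fintype _

lemma iso_natCard {V W : Type} {G : SimpleGraph V} {G' : SimpleGraph W} (φ : G ≃g G') :
    Nat.card V = Nat.card W ∧ G.edgeSet.ncard = G'.edgeSet.ncard := by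
  refine ⟨Nat.card_congr φ.toEquiv, ?_⟩
  rw [← Nat.card_coe_set_eq, ← Nat.card_coe_set_eq]
  exact Nat.card_congr φ.mapEdgeSet

lemma apexSet_ncard {T : Type} (a : T) :
    ({some (some a), some none, none} : Set (Option (Option T))).ncard = 3 := by
  rw [Set.ncard_insert_of_notMem (by simp) (Set.toFinite _),
    Set.ncard_pair (by simp)]

lemma memF_card {i j : ℕ} {V : Type} {G : SimpleGraph V} (h : MemF i j G) :
    Finite V ∧ Nat.card V = i + 3 * j ∧ G.edgeSet.ncard = i + 5 * j := by
  induction h with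
  | @cycle i hi V G h =>
    obtain ⟨φ⟩ := h
    have : NeZero i := ⟨by omega⟩
    have hfin : Finite V := Finite.of_equiv _ φ.toEquiv.symm
    obtain ⟨h1, h2⟩ := iso_natCard φ
    refine ⟨hfin, ?_, ?_⟩
    · rw [h1, Nat.card_eq_fintype_card, ZMod.card]; omega
    · rw [h2, cyc_ncard_edgeSet hi]; omega
  | @k4 V G h =>
    obtain ⟨φ⟩ := h
    have hfin : Finite V := Finite.of_equiv _ φ.toEquiv.symm
    obtain ⟨h1, h2⟩ := iso_natCard φ
    refine ⟨hfin, ?_, ?_⟩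
    · rw [h1]; simp [Nat.card_eq_fintype_card]
    · rw [h2, k4_ncard_edgeSet]
  | @circ j hj V H hH x y hxy e1 e2 he1 he2 W G hG ih =>
    obtain ⟨hfin, hn, hm⟩ := ih
    haveI := hfin
    have hm1 : (subdivide H x y).edgeSet.ncard = H.edgeSet.ncard + 1 :=
      subdivide_ncard_edgeSet hxy
    rcases hG with ⟨hne, x1, y1, x2, y2, he1eq, he2eq, ⟨φ⟩⟩ | ⟨heq, x', y', he1eq, ⟨φ⟩⟩
    · subst he1eq; subst he2eq
      rw [SimpleGraph.mem_edgeSet] at he1 he2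
      have hadj2 : (subdivide (subdivide H x y) x1 y1).Adj (some x2) (some y2) := by
        rw [subdivide_adj_some]
        exact ⟨he2, fun hc => hne (by rw [hc])⟩
      have hm2 := subdivide_ncard_edgeSet he1
      have hm3 := subdivide_ncard_edgeSet hadj2
      have hm4 := addApex_ncard_edgeSet
        (subdivide (subdivide (subdivide H x y) x1 y1) (some x2) (some y2))
        ({some (some none), some none, none} : Set (Option (Option (Option V))))
      rw [apexSet_ncard] at hm4
      have hfinW : Finite W := Finite.of_equiv _ φ.toEquiv.symm
      obtain ⟨h1, h2⟩ := iso_natCard φ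
      refine ⟨hfinW, ?_, ?_⟩
      · rw [h1, natCard_option, natCard_option, natCard_option, natCard_option, hn]
        omega
      · rw [h2, hm4, hm3, hm2, hm1, hm]
        omega
    · subst he1eq
      rw [SimpleGraph.mem_edgeSet] at he1
      have hadj2 : (subdivide (subdivide H x y) x' y').Adj none (some y') := by
        exact ((subdivide_adj_none (subdivide H x y) x' y' y').mpr (Or.inr rfl)).symm
      have hm2 := subdivide_ncard_edgeSet he1
      have hm3 := subdivide_ncard_edgeSet hadj2
      have hm4 := addApex_ncard_edgeSet
        (subdivide (subdivide (subdivide H x y) x' y') none (some y'))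
        ({some (some none), some none, none} : Set (Option (Option (Option V))))
      rw [apexSet_ncard] at hm4
      have hfinW : Finite W := Finite.of_equiv _ φ.toEquiv.symm
      obtain ⟨h1, h2⟩ := iso_natCard φ
      refine ⟨hfinW, ?_, ?_⟩
      · rw [h1, natCard_option, natCard_option, natCard_option, natCard_option, hn]
        omega
      · rw [h2, hm4, hm3, hm2, hm1, hm]
        omega
  | @subd i j hj V H hH x y hxy W G hG ih =>
    obtain ⟨hfin, hn, hm⟩ := ih
    haveI := hfin
    obtain ⟨φ⟩ := hG
    have hfinW : Finite W := Finite.of_equiv _ φ.toEquiv.symm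
    obtain ⟨h1, h2⟩ := iso_natCard φ
    refine ⟨hfinW, ?_, ?_⟩
    · rw [h1, natCard_option, hn]; omega
    · rw [h2, subdivide_ncard_edgeSet hxy, hm]; omega

lemma induce_edgeSet_image {V : Type} (H : SimpleGraph V) (S : Set V) :
    Sym2.map (Subtype.val : S → V) '' (H.induce S).edgeSet
      = {e ∈ H.edgeSet | ∀ v ∈ e, v ∈ S} := by
  ext e
  constructor
  · rintro ⟨z, hz, rfl⟩
    induction z using Sym2.ind with
    | _ a b =>
      rw [SimpleGraph.mem_edgeSet] at hz
      refine ⟨(SimpleGraph.mem_edgeSet _).mpr (by simpa using hz), ?_⟩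
      intro v hv
      rw [Sym2.map_pair_eq, Sym2.mem_iff] at hv
      rcases hv with rfl | rfl
      · exact a.2
      · exact b.2
  · rintro ⟨he, hmem⟩
    induction e using Sym2.ind with
    | _ u v =>
      rw [SimpleGraph.mem_edgeSet] at he
      have hu : u ∈ S := hmem u (Sym2.mem_mk_left _ _)
      have hv : v ∈ S := hmem v (Sym2.mem_mk_right _ _)
      exact ⟨s(⟨u, hu⟩, ⟨v, hv⟩), (SimpleGraph.mem_edgeSet _).mpr (by simpa using he), rfl⟩

lemma induce_ncard_edgeSet {V : Type} (H : SimpleGraph V) (S : Set V) :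
    (H.induce S).edgeSet.ncard = {e ∈ H.edgeSet | ∀ v ∈ e, v ∈ S}.ncard := by
  rw [← induce_edgeSet_image,
    Set.ncard_image_of_injective _ (Sym2.map.injective Subtype.val_injective)]

lemma partition_ncard_vertices {V : Type} [Fintype V] {ι : Type} [Fintype ι]
    (P : V → ι) : Nat.card V = ∑ l, (P ⁻¹' {l}).ncard := by
  classical
  rw [Nat.card_eq_fintype_card, ← Finset.card_univ,
    Finset.card_eq_sum_card_fiberwise (f := P) (fun x _ => Finset.mem_univ (P x))]
  refine Finset.sum_congr rfl fun l _ => ?_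
  rw [Set.ncard_eq_toFinset_card']
  congr 1
  ext v
  simp

lemma partition_ncard_edges {V : Type} [Fintype V] {ι : Type} [Fintype ι]
    (H : SimpleGraph V) (P : V → ι) (hP : ∀ u v, H.Adj u v → P u = P v) :
    H.edgeSet.ncard = ∑ l, (H.induce (P ⁻¹' {l})).edgeSet.ncard := by
  classical
  have hQmem : ∀ e ∈ H.edgeSet, ∀ v ∈ e, P v = P e.out.1 := by
    intro e
    induction e using Sym2.ind with
    | _ a b =>
      intro he v hv
      rw [SimpleGraph.mem_edgeSet] at he
      have hout := Sym2.out_fst_mem s(a, b)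
      rw [Sym2.mem_iff] at hv hout
      have hab := hP a b he
      rcases hv with rfl | rfl <;> rcases hout with h | h <;> rw [h] <;>
        first | rfl | exact hab | exact hab.symm
  rw [Set.ncard_eq_toFinset_card' H.edgeSet,
    Finset.card_eq_sum_card_fiberwise (f := fun e => P e.out.1) (t := Finset.univ)
      (fun x _ => Finset.mem_univ _)]
  refine Finset.sum_congr rfl fun l _ => ?_
  rw [induce_ncard_edgeSet, Set.ncard_eq_toFinset_card']
  congr 1
  ext e
  simp only [Set.mem_toFinset, Finset.mem_filter, Set.mem_setOf_eq, Set.mem_preimage,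
    Set.mem_singleton_iff]
  constructor
  · rintro ⟨he, hQ⟩
    exact ⟨he, fun v hv => by rw [hQmem e he v hv]; exact hQ⟩
  · rintro ⟨he, hall⟩
    exact ⟨he, hall _ (Sym2.out_fst_mem e)⟩

instance : DecidableRel petersen.Adj := fun a b =>
  decidable_of_iff _ (SimpleGraph.fromRel_adj _ a b).symm

instance : DecidableRel Rgraph.Adj := fun a b =>
  decidable_of_iff (petersen.Adj a b ∧
      s(a, b) ≠ s(((0 : ZMod 5), (0 : Fin 2)), ((1 : ZMod 5), (0 : Fin 2))))
    (by rw [Rgraph, SimpleGraph.deleteEdges_adj]; simp)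

lemma rgraph_ncard_edgeSet : Rgraph.edgeSet.ncard = 14 := by
  rw [Set.ncard_eq_toFinset_card']
  decide

lemma rgraph_natCard : Nat.card (ZMod 5 × Fin 2) = 10 := by
  simp [Nat.card_eq_fintype_card]

lemma lgraph_ncard_edgeSet : Lgraph.edgeSet.ncard = 8 := by
  have h1 : (⊤ : SimpleGraph (Fin 4)).Adj 0 1 := by decide
  have h2 : (subdivide (⊤ : SimpleGraph (Fin 4)) 0 1).Adj (some 2) (some 3) := by
    rw [subdivide_adj_some]
    refine ⟨by decide, by decide⟩
  rw [Lgraph, subdivide_ncard_edgeSet h2, subdivide_ncard_edgeSet h1, k4_ncard_edgeSet]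

lemma lgraph_natCard : Nat.card (Option (Option (Fin 4))) = 6 := by
  rw [natCard_option, natCard_option]
  simp [Nat.card_eq_fintype_card]

lemma sum_fiber {k : ℕ} (f : Fin (k + 1) → ℕ) (A c : ℕ) (h0 : f 0 = A)
    (h : ∀ l, l ≠ 0 → f l = c) : ∑ l, f l = A + k * c := by
  rw [← Finset.add_sum_erase _ f (Finset.mem_univ 0), h0]
  congr 1
  rw [Finset.sum_congr rfl (fun l hl => h l (Finset.ne_of_mem_erase hl)),
    Finset.sum_const, Finset.card_erase_of_mem (Finset.mem_univ 0), Finset.card_univ]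
  simp [mul_comm]

end Statement15Aux

/-- well-definedness of the error terms on
`F^g_{i,j,k} ∩ F_{i',j'}`. -/
theorem statement15 (g : ℕ) (hg : g = 4 ∨ g = 5) (i j k i' j' : ℕ)
    (hi : 1 ≤ i) (hj : j ≤ i) (hi' : 1 ≤ i') (hi'4 : i' ≤ 4) (hj' : j' ≤ i')
    {V : Type} [Fintype V] (G : SimpleGraph V)
    (h1 : MemFG g i j k G) (h2 : MemF i' j' G) :
    max (1 - tg g + (j : ℝ) * (1 - 5 * tg g) - (i : ℝ) * tg g) 0 =
      max (1 + (j' : ℝ) * (1 - 5 * tg g) - (i' : ℝ) * tg g) 0 :=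
  by
  classical
  obtain ⟨-, -, P, H, hHG, hP, hF, hLR, hextra, -⟩ := h1
  -- counts for G from MemF i' j'
  obtain ⟨hfinV, hcardV, hcardE⟩ := memF_card h2
  -- edges of G vs H
  have hsub : H.edgeSet ⊆ G.edgeSet := SimpleGraph.edgeSet_mono hHG
  have hGE : G.edgeSet.ncard = H.edgeSet.ncard + (k + 1) := by
    have := Set.ncard_diff_add_ncard_of_subset hsub (Set.toFinite _)
    omega
  have hV := partition_ncard_vertices P
  have hE := partition_ncard_edges H P hP
  obtain ⟨-, hF1, hF2⟩ := memF_card hF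
  rw [Nat.card_coe_set_eq] at hF1
  rcases hLR with ⟨hg4, hiso⟩ | ⟨hg5, hiso⟩
  · -- g = 4, pieces are L
    have hVl : ∀ l : Fin (k + 1), l ≠ 0 → (P ⁻¹' {l}).ncard = 6 := by
      intro l hl
      obtain ⟨φ⟩ := hiso l hl
      obtain ⟨c1, -⟩ := iso_natCard φ
      rw [← Nat.card_coe_set_eq, c1, lgraph_natCard]
    have hEl : ∀ l : Fin (k + 1), l ≠ 0 →
        (H.induce (P ⁻¹' {l})).edgeSet.ncard = 8 := by
      intro l hl
      obtain ⟨φ⟩ := hiso l hl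
      obtain ⟨-, c2⟩ := iso_natCard φ
      rw [c2, lgraph_ncard_edgeSet]
    rw [sum_fiber _ (i + 3 * j) 6 hF1 hVl] at hV
    rw [sum_fiber _ (i + 5 * j) 8 hF2 hEl] at hE
    have heq1 : i' + 3 * j' = i + 3 * j + k * 6 := by omega
    have heq2 : i' + 5 * j' = i + 5 * j + k * 8 + (k + 1) := by omega
    have hk : k = 1 ∧ i' = i ∧ j' = j + 2 := by omega
    obtain ⟨-, rfl, rfl⟩ := hk
    subst hg4
    have hc : ((j + 2 : ℕ) : ℝ) = (j : ℝ) + 2 := by push_cast; ring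
    rw [hc]
    have ht : tg 4 = 2 / 9 := by simp [tg]
    rw [ht]
    congr 1
    ring
  · -- g = 5, pieces are R
    have hVl : ∀ l : Fin (k + 1), l ≠ 0 → (P ⁻¹' {l}).ncard = 10 := by
      intro l hl
      obtain ⟨φ⟩ := hiso l hl
      obtain ⟨c1, -⟩ := iso_natCard φ
      rw [← Nat.card_coe_set_eq, c1, rgraph_natCard]
    have hEl : ∀ l : Fin (k + 1), l ≠ 0 →
        (H.induce (P ⁻¹' {l})).edgeSet.ncard = 14 := by
      intro l hl
      obtain ⟨φ⟩ := hiso l hl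
      obtain ⟨-, c2⟩ := iso_natCard φ
      rw [c2, rgraph_ncard_edgeSet]
    rw [sum_fiber _ (i + 3 * j) 10 hF1 hVl] at hV
    rw [sum_fiber _ (i + 5 * j) 14 hF2 hEl] at hE
    have heq1 : i' + 3 * j' = i + 3 * j + k * 10 := by omega
    have heq2 : i' + 5 * j' = i + 5 * j + k * 14 + (k + 1) := by omega
    have hk : k = 1 ∧ i' = i + 1 ∧ j' = j + 3 := by omega
    obtain ⟨-, rfl, rfl⟩ := hk
    subst hg5
    have hc1 : ((j + 3 : ℕ) : ℝ) = (j : ℝ) + 3 := by push_cast; ring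
    have hc2 : ((i + 1 : ℕ) : ℝ) = (i : ℝ) + 1 := by push_cast; ring
    rw [hc1, hc2]
    have ht : tg 5 = 1 / 5 := by norm_num [tg]
    rw [ht]
    congr 1
    ring


end InducedForest
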